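/- Let T be the 2×2 integer matrix with entries T₁₁ = −3, T₁₂ = −1, T₂₁ = 0, T₂₂ = 3, and let D = { (0,0)ᵀ, (2,1)ᵀ, (−1,1)ᵀ, (1,3)ᵀ, (2,0)ᵀ, (2,2)ᵀ, (−2,2)ᵀ, (−1,3)ᵀ } ⊂ ℤ². Then the attractor F(T,D) is connected. -/

import Mathlib

open Matrix Metric

def castVec {k : ℕ} (d : Fin k → ℤ) : Fin k → ℝ := fun i => (d i : ℝ)

noncomputable def Mi : Matrix (Fin 2) (Fin 2) ℝ := !![-1/3, -1/9; 0, 1/3]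

noncomputable def fmap (d : Fin 2 → ℤ) : (Fin 2 → ℝ) → (Fin 2 → ℝ) :=
  fun x => Mi *ᵥ (x + castVec d)

lemma hMinv : (!![(-3 : ℝ), -1; 0, 3])⁻¹ = Mi := by
  apply Matrix.inv_eq_right_inv
  ext i j
  fin_cases i <;> fin_cases j <;>
    simp [Mi, Matrix.mul_apply, Fin.sum_univ_two] <;> norm_num

lemma norm_Mi_mulVec_le (v : Fin 2 → ℝ) : ‖Mi *ᵥ v‖ ≤ (4/9) * ‖v‖ := by
  have h0 : ‖v 0‖ ≤ ‖v‖ := norm_le_pi_norm v 0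
  have h1 : ‖v 1‖ ≤ ‖v‖ := norm_le_pi_norm v 1
  rw [Real.norm_eq_abs] at h0 h1
  have ha0 := abs_nonneg (v 0)
  have ha1 := abs_nonneg (v 1)
  have hb0 := neg_abs_le (v 0)
  have hb1 := neg_abs_le (v 1)
  have hc0 := le_abs_self (v 0)
  have hc1 := le_abs_self (v 1)
  apply pi_norm_le_iff_of_nonneg (by positivity) |>.2
  intro i
  fin_cases i <;>
    simp [Mi, Matrix.mulVec, dotProduct, Fin.sum_univ_two, Real.norm_eq_abs] <;>
    first
      | nlinarith
      | (rw [abs_le]; constructor <;> nlinarith)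

lemma fmap_dist (d : Fin 2 → ℤ) (x y : Fin 2 → ℝ) :
    dist (fmap d x) (fmap d y) ≤ (4/9) * dist x y := by
  rw [dist_eq_norm, dist_eq_norm]
  have h : fmap d x - fmap d y = Mi *ᵥ (x - y) := by
    simp [fmap, ← Matrix.mulVec_sub]
    constructor <;> ring
  rw [h]
  exact norm_Mi_mulVec_le _

lemma fmap_cont (d : Fin 2 → ℤ) : Continuous (fmap d) :=
  (LipschitzWith.of_dist_le_mul (K := (4/9 : NNReal)) (fun x y => by
    simpa using fmap_dist d x y)).continuous

lemma fixed_mem {F : Set (Fin 2 → ℝ)} (hne : F.Nonempty) (hcl : IsClosed F)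
    {g : (Fin 2 → ℝ) → (Fin 2 → ℝ)} {c : ℝ} (hc0 : 0 ≤ c) (hc1 : c < 1)
    (hlip : ∀ x y, dist (g x) (g y) ≤ c * dist x y)
    (hmaps : ∀ x ∈ F, g x ∈ F) {p : Fin 2 → ℝ} (hp : g p = p) : p ∈ F := by
  obtain ⟨x0, hx0⟩ := hne
  have hiter : ∀ n, g^[n] x0 ∈ F ∧ dist (g^[n] x0) p ≤ c ^ n * dist x0 p := by
    intro n
    induction n with
    | zero => simpa using hx0
    | succ n ih =>
      refine ⟨by rw [Function.iterate_succ_apply']; exact hmaps _ ih.1, ?_⟩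
      rw [Function.iterate_succ_apply']
      calc dist (g (g^[n] x0)) p = dist (g (g^[n] x0)) (g p) := by rw [hp]
        _ ≤ c * dist (g^[n] x0) p := hlip _ _
        _ ≤ c * (c ^ n * dist x0 p) := mul_le_mul_of_nonneg_left ih.2 hc0
        _ = c ^ (n + 1) * dist x0 p := by ring
  have hpcl : p ∈ closure F := by
    rw [Metric.mem_closure_iff]
    intro ε hε
    have h0 : Filter.Tendsto (fun n => c ^ n * dist x0 p) Filter.atTop (nhds 0) := by
      simpa using (tendsto_pow_atTop_nhds_zero_of_lt_one hc0 hc1).mul_const (dist x0 p)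
    obtain ⟨n, hn⟩ := (h0.eventually (gt_mem_nhds hε)).exists
    exact ⟨g^[n] x0, (hiter n).1, by rw [dist_comm]; exact lt_of_le_of_lt (hiter n).2 hn⟩
  rwa [hcl.closure_eq] at hpcl

lemma fixed_mem_two {F : Set (Fin 2 → ℝ)} (hne : F.Nonempty) (hcl : IsClosed F)
    {a b : Fin 2 → ℤ} (ha : ∀ x ∈ F, fmap a x ∈ F) (hb : ∀ x ∈ F, fmap b x ∈ F)
    {p : Fin 2 → ℝ} (hp : fmap a (fmap b p) = p) : p ∈ F := by
  refine fixed_mem hne hcl (c := 16/81) (by norm_num) (by norm_num) (fun x y => ?_)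
    (fun x hx => ha _ (hb _ hx)) hp
  calc dist (fmap a (fmap b x)) (fmap a (fmap b y)) ≤ 4/9 * dist (fmap b x) (fmap b y) :=
        fmap_dist _ _ _
    _ ≤ 4/9 * (4/9 * dist x y) := by
        have := fmap_dist b x y; nlinarith [dist_nonneg (x := fmap b x) (y := fmap b y)]
    _ = 16/81 * dist x y := by ring

example : fmap ![2,2] (fmap ![-2,2] ![(-5:ℝ)/4, 1]) = ![(-5:ℝ)/4, 1] := by
  funext i
  fin_cases i <;>
    simp [fmap, Mi, castVec, Matrix.mulVec, dotProduct, Fin.sum_univ_two, Matrix.vecHead, Matrix.vecTail] <;> norm_num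

noncomputable def SU (A : Set (Fin 2 → ℝ)) : Set (Fin 2 → ℝ) :=
  fmap ![2,0] '' A ∪ (fmap ![0,0] '' A ∪ (fmap ![-1,1] '' A ∪ (fmap ![-2,2] '' A ∪
    (fmap ![-1,3] '' A ∪ (fmap ![1,3] '' A ∪ (fmap ![2,2] '' A ∪ fmap ![2,1] '' A))))))

lemma SU_mono {A B : Set (Fin 2 → ℝ)} (h : A ⊆ B) : SU A ⊆ SU B := by
  unfold SU
  gcongr <;> exact Set.image_mono h

lemma SU_compact {A : Set (Fin 2 → ℝ)} (h : IsCompact A) : IsCompact (SU A) := by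
  unfold SU
  repeat' apply IsCompact.union
  all_goals exact h.image (fmap_cont _)
open Matrix Metric

set_option maxHeartbeats 2000000 in

theorem stmt14
    (D : Finset (Fin 2 → ℤ))
    (hD : D = {![0, 0], ![2, 1], ![-1, 1], ![1, 3], ![2, 0], ![2, 2], ![-2, 2],
      ![-1, 3]})
    (F : Set (Fin 2 → ℝ)) (hne : F.Nonempty) (hcpt : IsCompact F)
    (hfix : F = ⋃ d ∈ D,
      (fun x => (!![(-3 : ℝ), -1; 0, 3])⁻¹ *ᵥ (x + castVec d)) '' F) :
    IsConnected F := by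
  subst hD
  rw [hMinv] at hfix
  have hfix2 : F = ⋃ d ∈ ({![0, 0], ![2, 1], ![-1, 1], ![1, 3], ![2, 0], ![2, 2], ![-2, 2],
      ![-1, 3]} : Finset (Fin 2 → ℤ)), fmap d '' F := hfix
  -- per-digit invariance
  have hin : ∀ d ∈ ({![0, 0], ![2, 1], ![-1, 1], ![1, 3], ![2, 0], ![2, 2], ![-2, 2],
      ![-1, 3]} : Finset (Fin 2 → ℤ)), ∀ x ∈ F, fmap d x ∈ F := by
    intro d hd x hx
    rw [hfix2]
    exact Set.mem_biUnion hd ⟨x, hx, rfl⟩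
  have hSUF : SU F = F := by
    have h : SU F = ⋃ d ∈ ({![0, 0], ![2, 1], ![-1, 1], ![1, 3], ![2, 0], ![2, 2], ![-2, 2],
        ![-1, 3]} : Finset (Fin 2 → ℤ)), fmap d '' F := by
      simp only [SU, Finset.set_biUnion_insert, Finset.set_biUnion_singleton]
      ext x
      simp only [Set.mem_union]
      tauto
    exact h.trans hfix2.symm
  have m0 : ∀ x ∈ F, fmap ![0, 0] x ∈ F := hin ![0, 0] (Finset.mem_insert_self _ _)
  have m1 : ∀ x ∈ F, fmap ![2, 1] x ∈ F := hin ![2, 1] (Finset.mem_insert_of_mem (Finset.mem_insert_self _ _))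
  have m2 : ∀ x ∈ F, fmap ![-1, 1] x ∈ F := hin ![-1, 1] (Finset.mem_insert_of_mem (Finset.mem_insert_of_mem (Finset.mem_insert_self _ _)))
  have m3 : ∀ x ∈ F, fmap ![1, 3] x ∈ F := hin ![1, 3] (Finset.mem_insert_of_mem (Finset.mem_insert_of_mem (Finset.mem_insert_of_mem (Finset.mem_insert_self _ _))))
  have m4 : ∀ x ∈ F, fmap ![2, 0] x ∈ F := hin ![2, 0] (Finset.mem_insert_of_mem (Finset.mem_insert_of_mem (Finset.mem_insert_of_mem (Finset.mem_insert_of_mem (Finset.mem_insert_self _ _)))))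
  have m5 : ∀ x ∈ F, fmap ![2, 2] x ∈ F := hin ![2, 2] (Finset.mem_insert_of_mem (Finset.mem_insert_of_mem (Finset.mem_insert_of_mem (Finset.mem_insert_of_mem (Finset.mem_insert_of_mem (Finset.mem_insert_self _ _))))))
  have m6 : ∀ x ∈ F, fmap ![-2, 2] x ∈ F := hin ![-2, 2] (Finset.mem_insert_of_mem (Finset.mem_insert_of_mem (Finset.mem_insert_of_mem (Finset.mem_insert_of_mem (Finset.mem_insert_of_mem (Finset.mem_insert_of_mem (Finset.mem_insert_self _ _)))))))
  have m7 : ∀ x ∈ F, fmap ![-1, 3] x ∈ F := hin ![-1, 3] (Finset.mem_insert_of_mem (Finset.mem_insert_of_mem (Finset.mem_insert_of_mem (Finset.mem_insert_of_mem (Finset.mem_insert_of_mem (Finset.mem_insert_of_mem (Finset.mem_insert_of_mem (Finset.mem_singleton_self _))))))))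
  have hP1 : (![(-5:ℝ)/4, 1] : Fin 2 → ℝ) ∈ F := by
    refine fixed_mem_two hne hcpt.isClosed m5 m6 ?_
    funext i
    fin_cases i <;>
      simp [fmap, Mi, castVec, Matrix.mulVec, dotProduct, Fin.sum_univ_two,
        Matrix.vecHead, Matrix.vecTail] <;> norm_num
  have hP2 : (![(3:ℝ)/4, 1] : Fin 2 → ℝ) ∈ F := by
    refine fixed_mem_two hne hcpt.isClosed m6 m5 ?_
    funext i
    fin_cases i <;>
      simp [fmap, Mi, castVec, Matrix.mulVec, dotProduct, Fin.sum_univ_two,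
        Matrix.vecHead, Matrix.vecTail] <;> norm_num
  have hP3 : (![(-3:ℝ)/4, 9/8] : Fin 2 → ℝ) ∈ F := by
    refine fixed_mem_two hne hcpt.isClosed m3 m0 ?_
    funext i
    fin_cases i <;>
      simp [fmap, Mi, castVec, Matrix.mulVec, dotProduct, Fin.sum_univ_two,
        Matrix.vecHead, Matrix.vecTail] <;> norm_num
  have hP4 : (![(1:ℝ)/4, 1/8] : Fin 2 → ℝ) ∈ F := by
    refine fixed_mem_two hne hcpt.isClosed m0 m1 ?_
    funext i
    fin_cases i <;>
      simp [fmap, Mi, castVec, Matrix.mulVec, dotProduct, Fin.sum_univ_two,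
        Matrix.vecHead, Matrix.vecTail] <;> norm_num
  have hP5 : (![(1:ℝ)/4, 1] : Fin 2 → ℝ) ∈ F := by
    refine fixed_mem_two hne hcpt.isClosed m6 m6 ?_
    funext i
    fin_cases i <;>
      simp [fmap, Mi, castVec, Matrix.mulVec, dotProduct, Fin.sum_univ_two,
        Matrix.vecHead, Matrix.vecTail] <;> norm_num
  have hP6 : (![(-3:ℝ)/4, 0] : Fin 2 → ℝ) ∈ F := by
    refine fixed_mem_two hne hcpt.isClosed m4 m0 ?_
    funext i
    fin_cases i <;>
      simp [fmap, Mi, castVec, Matrix.mulVec, dotProduct, Fin.sum_univ_two,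
        Matrix.vecHead, Matrix.vecTail] <;> norm_num
  have hP7 : (![(-5:ℝ)/8, 1/2] : Fin 2 → ℝ) ∈ F := by
    refine fixed_mem_two hne hcpt.isClosed m1 m1 ?_
    funext i
    fin_cases i <;>
      simp [fmap, Mi, castVec, Matrix.mulVec, dotProduct, Fin.sum_univ_two,
        Matrix.vecHead, Matrix.vecTail] <;> norm_num
  have hP8 : (![(-5:ℝ)/8, 3/2] : Fin 2 → ℝ) ∈ F := by
    refine fixed_mem_two hne hcpt.isClosed m3 m3 ?_
    funext i
    fin_cases i <;>
      simp [fmap, Mi, castVec, Matrix.mulVec, dotProduct, Fin.sum_univ_two,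
        Matrix.vecHead, Matrix.vecTail] <;> norm_num
  have eq1 : fmap ![0, 0] (![(3:ℝ)/4, 1] : Fin 2 → ℝ) = fmap ![2, 0] (![(-5:ℝ)/4, 1] : Fin 2 → ℝ) := by
    funext i
    fin_cases i <;>
      simp [fmap, Mi, castVec, Matrix.mulVec, dotProduct, Fin.sum_univ_two,
        Matrix.vecHead, Matrix.vecTail] <;> norm_num
  have eq2 : fmap ![-1, 1] (![(1:ℝ)/4, 1/8] : Fin 2 → ℝ) = fmap ![0, 0] (![(-3:ℝ)/4, 9/8] : Fin 2 → ℝ) := by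
    funext i
    fin_cases i <;>
      simp [fmap, Mi, castVec, Matrix.mulVec, dotProduct, Fin.sum_univ_two,
        Matrix.vecHead, Matrix.vecTail] <;> norm_num
  have eq3 : fmap ![-2, 2] (![(1:ℝ)/4, 1/8] : Fin 2 → ℝ) = fmap ![-1, 1] (![(-3:ℝ)/4, 9/8] : Fin 2 → ℝ) := by
    funext i
    fin_cases i <;>
      simp [fmap, Mi, castVec, Matrix.mulVec, dotProduct, Fin.sum_univ_two,
        Matrix.vecHead, Matrix.vecTail] <;> norm_num
  have eq4 : fmap ![-1, 3] (![(-3:ℝ)/4, 0] : Fin 2 → ℝ) = fmap ![-2, 2] (![(1:ℝ)/4, 1] : Fin 2 → ℝ) := by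
    funext i
    fin_cases i <;>
      simp [fmap, Mi, castVec, Matrix.mulVec, dotProduct, Fin.sum_univ_two,
        Matrix.vecHead, Matrix.vecTail] <;> norm_num
  have eq5 : fmap ![1, 3] (![(-5:ℝ)/4, 1] : Fin 2 → ℝ) = fmap ![-1, 3] (![(3:ℝ)/4, 1] : Fin 2 → ℝ) := by
    funext i
    fin_cases i <;>
      simp [fmap, Mi, castVec, Matrix.mulVec, dotProduct, Fin.sum_univ_two,
        Matrix.vecHead, Matrix.vecTail] <;> norm_num
  have eq6 : fmap ![2, 2] (![(-3:ℝ)/4, 9/8] : Fin 2 → ℝ) = fmap ![1, 3] (![(1:ℝ)/4, 1/8] : Fin 2 → ℝ) := by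
    funext i
    fin_cases i <;>
      simp [fmap, Mi, castVec, Matrix.mulVec, dotProduct, Fin.sum_univ_two,
        Matrix.vecHead, Matrix.vecTail] <;> norm_num
  have eq7 : fmap ![2, 1] (![(-5:ℝ)/8, 3/2] : Fin 2 → ℝ) = fmap ![2, 2] (![(-5:ℝ)/8, 1/2] : Fin 2 → ℝ) := by
    funext i
    fin_cases i <;>
      simp [fmap, Mi, castVec, Matrix.mulVec, dotProduct, Fin.sum_univ_two,
        Matrix.vecHead, Matrix.vecTail] <;> norm_num
  -- connectivity of SU A
  have hSUconn : ∀ A : Set (Fin 2 → ℝ), F ⊆ A → IsConnected A → IsConnected (SU A) := by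
    intro A hFA hA
    have himg : ∀ d : Fin 2 → ℤ, IsConnected (fmap d '' A) :=
      fun d => hA.image _ (fmap_cont d).continuousOn
    unfold SU
    refine (himg _).union ?_ <| (himg _).union ?_ <| (himg _).union ?_ <| (himg _).union ?_ <|
      (himg _).union ?_ <| (himg _).union ?_ <| IsConnected.union ?_ (himg _) (himg _)
    · exact ⟨fmap ![2, 0] ![(-5:ℝ)/4, 1], ⟨![(-5:ℝ)/4, 1], hFA hP1, rfl⟩, Set.mem_union_left _ ⟨![(3:ℝ)/4, 1], hFA hP2, eq1⟩⟩
    · exact ⟨fmap ![0, 0] ![(-3:ℝ)/4, 9/8], ⟨![(-3:ℝ)/4, 9/8], hFA hP3, rfl⟩, Set.mem_union_left _ ⟨![(1:ℝ)/4, 1/8], hFA hP4, eq2⟩⟩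
    · exact ⟨fmap ![-1, 1] ![(-3:ℝ)/4, 9/8], ⟨![(-3:ℝ)/4, 9/8], hFA hP3, rfl⟩, Set.mem_union_left _ ⟨![(1:ℝ)/4, 1/8], hFA hP4, eq3⟩⟩
    · exact ⟨fmap ![-2, 2] ![(1:ℝ)/4, 1], ⟨![(1:ℝ)/4, 1], hFA hP5, rfl⟩, Set.mem_union_left _ ⟨![(-3:ℝ)/4, 0], hFA hP6, eq4⟩⟩
    · exact ⟨fmap ![-1, 3] ![(3:ℝ)/4, 1], ⟨![(3:ℝ)/4, 1], hFA hP2, rfl⟩, Set.mem_union_left _ ⟨![(-5:ℝ)/4, 1], hFA hP1, eq5⟩⟩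
    · exact ⟨fmap ![1, 3] ![(1:ℝ)/4, 1/8], ⟨![(1:ℝ)/4, 1/8], hFA hP4, rfl⟩, Set.mem_union_left _ ⟨![(-3:ℝ)/4, 9/8], hFA hP3, eq6⟩⟩
    · exact ⟨fmap ![2, 2] ![(-5:ℝ)/8, 1/2], ⟨![(-5:ℝ)/8, 1/2], hFA hP7, rfl⟩, ⟨![(-5:ℝ)/8, 3/2], hFA hP8, eq7⟩⟩
  -- big invariant ball
  obtain ⟨R₀, hR₀⟩ := hcpt.isBounded.subset_closedBall (0 : Fin 2 → ℝ)
  set R : ℝ := max R₀ 3 with hRdef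
  have hR3 : (3:ℝ) ≤ R := le_max_right _ _
  have hFball : F ⊆ closedBall 0 R :=
    hR₀.trans (closedBall_subset_closedBall (le_max_left _ _))
  have hdig : ∀ d ∈ ({![0, 0], ![2, 1], ![-1, 1], ![1, 3], ![2, 0], ![2, 2], ![-2, 2],
      ![-1, 3]} : Finset (Fin 2 → ℤ)), ‖castVec d‖ ≤ 3 := by
    intro d hd
    fin_cases hd <;>
      · apply pi_norm_le_iff_of_nonneg (by norm_num) |>.2
        intro i
        fin_cases i <;> simp [castVec] <;> norm_num
  have hball : ∀ d ∈ ({![0, 0], ![2, 1], ![-1, 1], ![1, 3], ![2, 0], ![2, 2], ![-2, 2],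
      ![-1, 3]} : Finset (Fin 2 → ℤ)), ∀ x ∈ closedBall (0 : Fin 2 → ℝ) R,
      fmap d x ∈ closedBall (0 : Fin 2 → ℝ) R := by
    intro d hd x hx
    rw [mem_closedBall_zero_iff] at hx ⊢
    have h1 : ‖fmap d x‖ ≤ 4/9 * ‖x + castVec d‖ := norm_Mi_mulVec_le _
    have h2 : ‖x + castVec d‖ ≤ ‖x‖ + ‖castVec d‖ := norm_add_le _ _
    have h3 := hdig d hd
    nlinarith
  have hSUball : SU (closedBall (0 : Fin 2 → ℝ) R) ⊆ closedBall (0 : Fin 2 → ℝ) R := by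
    unfold SU
    refine Set.union_subset ?_ (Set.union_subset ?_ (Set.union_subset ?_ (Set.union_subset ?_ (Set.union_subset ?_ (Set.union_subset ?_ (Set.union_subset ?_ ?_))))))
    · rintro z ⟨x, hx, rfl⟩
      exact hball _ (Finset.mem_insert_of_mem (Finset.mem_insert_of_mem (Finset.mem_insert_of_mem (Finset.mem_insert_of_mem (Finset.mem_insert_self _ _))))) x hx
    · rintro z ⟨x, hx, rfl⟩
      exact hball _ (Finset.mem_insert_self _ _) x hx
    · rintro z ⟨x, hx, rfl⟩
      exact hball _ (Finset.mem_insert_of_mem (Finset.mem_insert_of_mem (Finset.mem_insert_self _ _))) x hx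
    · rintro z ⟨x, hx, rfl⟩
      exact hball _ (Finset.mem_insert_of_mem (Finset.mem_insert_of_mem (Finset.mem_insert_of_mem (Finset.mem_insert_of_mem (Finset.mem_insert_of_mem (Finset.mem_insert_of_mem (Finset.mem_insert_self _ _))))))) x hx
    · rintro z ⟨x, hx, rfl⟩
      exact hball _ (Finset.mem_insert_of_mem (Finset.mem_insert_of_mem (Finset.mem_insert_of_mem (Finset.mem_insert_of_mem (Finset.mem_insert_of_mem (Finset.mem_insert_of_mem (Finset.mem_insert_of_mem (Finset.mem_singleton_self _)))))))) x hx
    · rintro z ⟨x, hx, rfl⟩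
      exact hball _ (Finset.mem_insert_of_mem (Finset.mem_insert_of_mem (Finset.mem_insert_of_mem (Finset.mem_insert_self _ _)))) x hx
    · rintro z ⟨x, hx, rfl⟩
      exact hball _ (Finset.mem_insert_of_mem (Finset.mem_insert_of_mem (Finset.mem_insert_of_mem (Finset.mem_insert_of_mem (Finset.mem_insert_of_mem (Finset.mem_insert_self _ _)))))) x hx
    · rintro z ⟨x, hx, rfl⟩
      exact hball _ (Finset.mem_insert_of_mem (Finset.mem_insert_self _ _)) x hx
  -- the decreasing sequence
  set C : ℕ → Set (Fin 2 → ℝ) := fun n => SU^[n] (closedBall (0 : Fin 2 → ℝ) R) with hCdef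
  have hCs : ∀ n, C (n+1) = SU (C n) := fun n => Function.iterate_succ_apply' _ _ _
  have key : ∀ n, F ⊆ C n ∧ IsCompact (C n) ∧ IsConnected (C n) ∧ C (n+1) ⊆ C n := by
    intro n
    induction n with
    | zero =>
      refine ⟨hFball, isCompact_closedBall _ _,
        (convex_closedBall _ _).isConnected ⟨0, mem_closedBall_self (by norm_num; linarith)⟩, ?_⟩
      rw [hCs]
      exact hSUball
    | succ n ih =>
      refine ⟨?_, ?_, ?_, ?_⟩
      · rw [hCs]
        calc F = SU F := hSUF.symm
          _ ⊆ SU (C n) := SU_mono ih.1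
      · rw [hCs]; exact SU_compact ih.2.1
      · rw [hCs]; exact hSUconn _ ih.1 ih.2.2.1
      · rw [hCs (n+1)]
        calc SU (C (n+1)) ⊆ SU (C n) := SU_mono ih.2.2.2
          _ = C (n+1) := (hCs n).symm
  -- distance estimate
  have hstep : ∀ (d : Fin 2 → ℤ), (∀ w ∈ F, fmap d w ∈ F) → ∀ y : Fin 2 → ℝ,
      infDist (fmap d y) F ≤ 4/9 * infDist y F := by
    intro d hd y
    obtain ⟨z, hzF, hz⟩ := hcpt.exists_infDist_eq_dist hne y
    calc infDist (fmap d y) F ≤ dist (fmap d y) (fmap d z) :=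
          infDist_le_dist_of_mem (hd z hzF)
      _ ≤ 4/9 * dist y z := fmap_dist _ _ _
      _ = 4/9 * infDist y F := by rw [← hz]
  have hdist : ∀ n, ∀ x ∈ C n, infDist x F ≤ (4/9)^n * (2*R) := by
    intro n
    induction n with
    | zero =>
      intro x hx
      obtain ⟨y0, hy0⟩ := hne
      have h1 : infDist x F ≤ dist x y0 := infDist_le_dist_of_mem hy0
      have h2 : dist x y0 ≤ ‖x‖ + ‖y0‖ := by
        rw [dist_eq_norm]; exact norm_sub_le _ _
      have h3 : ‖x‖ ≤ R := mem_closedBall_zero_iff.1 hx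
      have h4 : ‖y0‖ ≤ R := mem_closedBall_zero_iff.1 (hFball hy0)
      simp only [pow_zero, one_mul]
      linarith
    | succ n ih =>
      intro x hx
      rw [hCs] at hx
      unfold SU at hx
      have hgen : ∀ (d : Fin 2 → ℤ), (∀ w ∈ F, fmap d w ∈ F) → ∀ y ∈ C n,
          infDist (fmap d y) F ≤ (4/9)^(n+1) * (2*R) := by
        intro d hd y hy
        calc infDist (fmap d y) F ≤ 4/9 * infDist y F := hstep d hd y
          _ ≤ 4/9 * ((4/9)^n * (2*R)) :=
              mul_le_mul_of_nonneg_left (ih y hy) (by norm_num)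
          _ = (4/9)^(n+1) * (2*R) := by ring
      simp only [Set.mem_union, Set.mem_image] at hx
      rcases hx with ⟨y,hy,rfl⟩|⟨y,hy,rfl⟩|⟨y,hy,rfl⟩|⟨y,hy,rfl⟩|⟨y,hy,rfl⟩|⟨y,hy,rfl⟩|⟨y,hy,rfl⟩|⟨y,hy,rfl⟩
      · exact hgen _ m4 y hy
      · exact hgen _ m0 y hy
      · exact hgen _ m2 y hy
      · exact hgen _ m6 y hy
      · exact hgen _ m7 y hy
      · exact hgen _ m3 y hy
      · exact hgen _ m5 y hy
      · exact hgen _ m1 y hy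
  -- intersection is F
  have hsubF : ∀ x, (∀ n, x ∈ C n) → x ∈ F := by
    intro x hx
    have hb : ∀ n, infDist x F ≤ (4/9:ℝ)^n * (2*R) := fun n => hdist n x (hx n)
    have h0 : Filter.Tendsto (fun n => (4/9:ℝ)^n * (2*R)) Filter.atTop (nhds 0) := by
      simpa using (tendsto_pow_atTop_nhds_zero_of_lt_one (by norm_num : (0:ℝ) ≤ 4/9)
        (by norm_num)).mul_const (2*R)
    have hle : infDist x F ≤ 0 := ge_of_tendsto' h0 hb
    have : infDist x F = 0 := le_antisymm hle infDist_nonneg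
    exact (hcpt.isClosed.mem_iff_infDist_zero hne).2 this
  -- finish: preconnectedness
  refine ⟨hne, ?_⟩
  intro u v hu hv huv hU hV
  by_contra hcon
  rw [Set.not_nonempty_iff_eq_empty] at hcon
  have hcu : F ∩ u = F \ v := by
    ext x
    constructor
    · rintro ⟨hxF, hxu⟩
      refine ⟨hxF, fun hxv => ?_⟩
      have : x ∈ F ∩ (u ∩ v) := ⟨hxF, hxu, hxv⟩
      rw [hcon] at this
      exact this
    · rintro ⟨hxF, hxv⟩
      rcases huv hxF with h | h
      · exact ⟨hxF, h⟩
      · exact absurd h hxv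
  have hcv : F ∩ v = F \ u := by
    ext x
    constructor
    · rintro ⟨hxF, hxv⟩
      refine ⟨hxF, fun hxu => ?_⟩
      have : x ∈ F ∩ (u ∩ v) := ⟨hxF, hxu, hxv⟩
      rw [hcon] at this
      exact this
    · rintro ⟨hxF, hxu⟩
      rcases huv hxF with h | h
      · exact absurd h hxu
      · exact ⟨hxF, h⟩
  have hAcpt : IsCompact (F ∩ u) := by rw [hcu]; exact hcpt.diff hv
  have hBcpt : IsCompact (F ∩ v) := by rw [hcv]; exact hcpt.diff hu
  have hdisj : Disjoint (F ∩ u) (F ∩ v) := by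
    rw [Set.disjoint_iff_inter_eq_empty, ← hcon]
    ext x; constructor
    · rintro ⟨⟨h1,h2⟩,⟨h3,h4⟩⟩; exact ⟨h1, h2, h4⟩
    · rintro ⟨h1, h2, h3⟩; exact ⟨⟨h1,h2⟩,⟨h1,h3⟩⟩
  obtain ⟨U, V, hUo, hVo, hAU, hBV, hUVdisj⟩ :=
    SeparatedNhds.of_isCompact_isCompact hAcpt hBcpt hdisj
  have hFUV : F ⊆ U ∪ V := by
    intro x hxF
    rcases huv hxF with h | h
    · exact Or.inl (hAU ⟨hxF, h⟩)
    · exact Or.inr (hBV ⟨hxF, h⟩)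
  have hant : Antitone C := antitone_nat_of_succ_le fun n => (key n).2.2.2
  have hex : ∃ n, C n ⊆ U ∪ V := by
    by_contra hno
    push_neg at hno
    have hnonempty : ∀ n, (C n \ (U ∪ V)).Nonempty := by
      intro n
      rcases Set.not_subset.1 (hno n) with ⟨x, hx1, hx2⟩
      exact ⟨x, hx1, hx2⟩
    have hinter : (⋂ n, C n \ (U ∪ V)).Nonempty := by
      apply IsCompact.nonempty_iInter_of_directed_nonempty_isCompact_isClosed
      · intro m n
        refine ⟨max m n, Set.diff_subset_diff_left (hant (le_max_left m n)),
          Set.diff_subset_diff_left (hant (le_max_right m n))⟩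
      · exact hnonempty
      · exact fun n => ((key n).2.1).diff (hUo.union hVo)
      · exact fun n => ((key n).2.1.isClosed).sdiff (hUo.union hVo)
    obtain ⟨x, hx⟩ := hinter
    have hxn : ∀ n, x ∈ C n := fun n => ((Set.mem_iInter.1 hx) n).1
    exact ((Set.mem_iInter.1 hx) 0).2 (hFUV (hsubF x hxn))
  obtain ⟨n, hn⟩ := hex
  obtain ⟨a, haF, hau⟩ := hU
  obtain ⟨b, hbF, hbv⟩ := hV
  have hCne := (key n).2.2.1.isPreconnected
  have := hCne U V hUo hVo hn ⟨a, (key n).1 haF, hAU ⟨haF, hau⟩⟩ ⟨b, (key n).1 hbF, hBV ⟨hbF, hbv⟩⟩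
  obtain ⟨w, -, hwU, hwV⟩ := this
  exact Set.disjoint_iff.1 hUVdisj ⟨hwU, hwV⟩
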